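/- Let m, n be odd positive integers and Δα₁, Δα₂, Δα₃ real. The area S = (1/2)∮₀^{2π}[x y′ − y x′]dα of the loop x(α) = â cos^m(α+Δα₁) + b̂_x sin^n(α+Δα₂), y(α) = b_y sin(α+Δα₃) equals π b_y · [ (â cos(Δα₁−Δα₃)/2^m)(2m C(m−1,(m−1)/2) − ((m−1)/2) C(m+1,(m+1)/2)) + (b̂_x sin(Δα₂−Δα₃)/2^n)(2n C(n−1,(n−1)/2) − ((n−1)/2) C(n+1,(n+1)/2)) ]. -/

import Mathlib

open Real intervalIntegral

lemma binom_key (k : ℕ) :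
    (k + 1) * Nat.choose (2 * k + 2) (k + 1) = 2 * (2 * k + 1) * Nat.choose (2 * k) k := by
  have hs : Nat.choose (2*k+1) (k+1) = Nat.choose (2*k+1) k := Nat.choose_symm_half k
  have h1 : Nat.choose (2 * k + 2) (k + 1) = 2 * Nat.choose (2 * k + 1) (k + 1) := by
    rw [show 2*k+2 = (2*k+1)+1 by ring, Nat.choose_succ_succ, hs]
    omega
  have h2 := Nat.add_one_mul_choose_eq (2 * k) k
  calc (k + 1) * Nat.choose (2 * k + 2) (k + 1)
      = 2 * (Nat.choose (2*k+1) (k+1) * (k+1)) := by rw [h1]; ring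
    _ = 2 * ((2*k+1) * Nat.choose (2*k) k) := by rw [← h2]
    _ = 2 * (2 * k + 1) * Nat.choose (2 * k) k := by ring

lemma binom_key' (k : ℕ) : ((k:ℝ) + 1) * Nat.choose (2 * k + 2) (k + 1)
    = 2 * (2 * (k:ℝ) + 1) * Nat.choose (2 * k) k := by exact_mod_cast binom_key k

lemma step_num (k : ℕ) : (2*(k:ℝ)+1)/(2*k+2) * (2*π*(Nat.choose (2*k) k)/4^k)
    = 2*π*(Nat.choose (2*k+2) (k+1))/4^(k+1) := by
  have hb' := binom_key' k
  have h4 : (4:ℝ)^k ≠ 0 := by positivity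
  have h2 : (2*(k:ℝ)+2) ≠ 0 := by positivity
  field_simp
  linear_combination (-2 * 4^k) * hb'

lemma cos_pow_even_int (k : ℕ) :
    ∫ x in (0:ℝ)..(2*π), cos x ^ (2*k) = 2 * π * (Nat.choose (2*k) k) / 4 ^ k := by
  induction k with
  | zero => simp
  | succ k ih =>
    rw [show 2 * (k+1) = 2*k + 2 by ring, integral_cos_pow, ih]
    simp only [Real.sin_two_pi, Real.sin_zero, mul_zero, sub_zero, zero_sub, zero_div, neg_zero,
      zero_add]
    push_cast
    rw [step_num k]

lemma sin_pow_even_int (k : ℕ) :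
    ∫ x in (0:ℝ)..(2*π), sin x ^ (2*k) = 2 * π * (Nat.choose (2*k) k) / 4 ^ k := by
  induction k with
  | zero => simp
  | succ k ih =>
    rw [show 2 * (k+1) = 2*k + 2 by ring, integral_sin_pow, ih]
    simp only [Real.sin_two_pi, Real.sin_zero, mul_zero, sub_zero, zero_sub, zero_div, neg_zero,
      zero_add, zero_pow, zero_mul, sub_self, Nat.succ_ne_zero, ne_eq, Nat.add_eq_zero,
      and_false, not_false_iff]
    push_cast
    rw [step_num k]


lemma cos_shift_even (k : ℕ) (c : ℝ) :
    ∫ x in (0:ℝ)..(2*π), cos (x+c) ^ (2*k) = 2 * π * (Nat.choose (2*k) k) / 4 ^ k := by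
  have hp : Function.Periodic (fun x => cos x ^ (2*k)) (2*π) := fun x => by
    simp [Real.cos_periodic x]
  have := intervalIntegral.integral_comp_add_right (a := (0:ℝ)) (b := 2*π)
    (fun x => cos x ^ (2*k)) c
  rw [this, zero_add, show 2*π+c = c+2*π by ring, hp.intervalIntegral_add_eq c 0, zero_add]
  exact cos_pow_even_int k

lemma sin_shift_even (k : ℕ) (c : ℝ) :
    ∫ x in (0:ℝ)..(2*π), sin (x+c) ^ (2*k) = 2 * π * (Nat.choose (2*k) k) / 4 ^ k := by
  have hp : Function.Periodic (fun x => sin x ^ (2*k)) (2*π) := fun x => by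
    simp [Real.sin_periodic x]
  have := intervalIntegral.integral_comp_add_right (a := (0:ℝ)) (b := 2*π)
    (fun x => sin x ^ (2*k)) c
  rw [this, zero_add, show 2*π+c = c+2*π by ring, hp.intervalIntegral_add_eq c 0, zero_add]
  exact sin_pow_even_int k

lemma cos_pow_mul_sin_zero (j : ℕ) (c : ℝ) :
    ∫ x in (0:ℝ)..(2*π), cos (x+c) ^ j * sin (x+c) = 0 := by
  have h : ∀ x : ℝ, HasDerivAt (fun x => -(cos (x+c) ^ (j+1)) / (j+1))
      (cos (x+c) ^ j * sin (x+c)) x := by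
    intro x
    have h1 : HasDerivAt (fun x : ℝ => cos (x+c)) (-sin (x+c)) x := by
      simpa using ((hasDerivAt_id x).add_const c).cos
    have := ((h1.fun_pow (j+1)).neg).div_const ((j:ℝ)+1)
    refine this.congr_deriv ?_
    have : ((j:ℝ)+1) ≠ 0 := by positivity
    simp only [Nat.add_sub_cancel, Nat.cast_add_one]
    field_simp
  rw [intervalIntegral.integral_eq_sub_of_hasDerivAt (fun x _ => h x)
    (by apply Continuous.intervalIntegrable; fun_prop)]
  simp [show 2*π+c = c+2*π by ring, Real.cos_add_two_pi]

lemma sin_pow_mul_cos_zero (j : ℕ) (c : ℝ) :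
    ∫ x in (0:ℝ)..(2*π), sin (x+c) ^ j * cos (x+c) = 0 := by
  have h : ∀ x : ℝ, HasDerivAt (fun x => (sin (x+c) ^ (j+1)) / (j+1))
      (sin (x+c) ^ j * cos (x+c)) x := by
    intro x
    have h1 : HasDerivAt (fun x : ℝ => sin (x+c)) (cos (x+c)) x := by
      simpa using ((hasDerivAt_id x).add_const c).sin
    have := (h1.fun_pow (j+1)).div_const ((j:ℝ)+1)
    refine this.congr_deriv ?_
    have : ((j:ℝ)+1) ≠ 0 := by positivity
    simp only [Nat.add_sub_cancel, Nat.cast_add_one]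
    field_simp
  rw [intervalIntegral.integral_eq_sub_of_hasDerivAt (fun x _ => h x)
    (by apply Continuous.intervalIntegrable; fun_prop)]
  simp [show 2*π+c = c+2*π by ring, Real.sin_add_two_pi]


lemma key_cos (j : ℕ) (c d : ℝ) :
    ∫ α in (0:ℝ)..(2*π), cos (α+c) ^ (2*j+1) * cos (α+d)
      = Real.cos (c-d) * (2 * π * (Nat.choose (2*j+2) (j+1)) / 4 ^ (j+1)) := by
  have hpt : ∀ α : ℝ, cos (α+c) ^ (2*j+1) * cos (α+d)
      = Real.cos (d-c) * cos (α+c) ^ (2*(j+1))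
        - Real.sin (d-c) * (cos (α+c) ^ (2*j+1) * sin (α+c)) := by
    intro α
    have hcd : cos (α+d) = cos (α+c) * Real.cos (d-c) - sin (α+c) * Real.sin (d-c) := by
      rw [show α+d = (α+c)+(d-c) by ring]; exact Real.cos_add _ _
    rw [hcd, show 2*(j+1) = 2*j+1+1 by ring, pow_succ]
    ring
  simp only [hpt]
  rw [intervalIntegral.integral_sub (by apply Continuous.intervalIntegrable; fun_prop)
    (by apply Continuous.intervalIntegrable; fun_prop),
    intervalIntegral.integral_const_mul, intervalIntegral.integral_const_mul,
    cos_shift_even (j+1) c, cos_pow_mul_sin_zero (2*j+1) c,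
    show Real.cos (d-c) = Real.cos (c-d) by rw [← Real.cos_neg]; ring_nf,
    show 2*(j+1) = 2*j+2 by ring]
  ring

lemma key_sin (j : ℕ) (c d : ℝ) :
    ∫ α in (0:ℝ)..(2*π), sin (α+c) ^ (2*j+1) * cos (α+d)
      = Real.sin (c-d) * (2 * π * (Nat.choose (2*j+2) (j+1)) / 4 ^ (j+1)) := by
  have hpt : ∀ α : ℝ, sin (α+c) ^ (2*j+1) * cos (α+d)
      = Real.cos (d-c) * (sin (α+c) ^ (2*j+1) * cos (α+c))
        - Real.sin (d-c) * sin (α+c) ^ (2*(j+1)) := by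
    intro α
    have hcd : cos (α+d) = cos (α+c) * Real.cos (d-c) - sin (α+c) * Real.sin (d-c) := by
      rw [show α+d = (α+c)+(d-c) by ring]; exact Real.cos_add _ _
    rw [hcd, show 2*(j+1) = 2*j+1+1 by ring, pow_succ]
    ring
  simp only [hpt]
  rw [intervalIntegral.integral_sub (by apply Continuous.intervalIntegrable; fun_prop)
    (by apply Continuous.intervalIntegrable; fun_prop),
    intervalIntegral.integral_const_mul, intervalIntegral.integral_const_mul,
    sin_shift_even (j+1) c, sin_pow_mul_cos_zero (2*j+1) c,
    show Real.sin (d-c) = -Real.sin (c-d) by rw [← Real.sin_neg]; ring_nf,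
    show 2*(j+1) = 2*j+2 by ring]
  ring


theorem stmt_15 (m n : ℕ) (hm : Odd m) (hmpos : 0 < m) (hn : Odd n) (hnpos : 0 < n)
    (ahat bxhat by' Δα₁ Δα₂ Δα₃ : ℝ)
    (x y : ℝ → ℝ)
    (hx : x = fun α => ahat * Real.cos (α + Δα₁) ^ m + bxhat * Real.sin (α + Δα₂) ^ n)
    (hy : y = fun α => by' * Real.sin (α + Δα₃)) :
    (1 / 2) * ∫ α in (0:ℝ)..(2 * π), (x α * deriv y α - y α * deriv x α) =
      π * by' *
        ((ahat * Real.cos (Δα₁ - Δα₃) / 2 ^ m) *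
            (2 * m * (Nat.choose (m - 1) ((m - 1) / 2) : ℝ) -
              ((m - 1 : ℕ) / 2 : ℕ) * (Nat.choose (m + 1) ((m + 1) / 2) : ℝ)) +
          (bxhat * Real.sin (Δα₂ - Δα₃) / 2 ^ n) *
            (2 * n * (Nat.choose (n - 1) ((n - 1) / 2) : ℝ) -
              ((n - 1 : ℕ) / 2 : ℕ) * (Nat.choose (n + 1) ((n + 1) / 2) : ℝ))) := by
  obtain ⟨k, hk⟩ := hm
  obtain ⟨l, hl⟩ := hn
  subst hk hl hx hy
  -- derivatives
  set y' : ℝ → ℝ := fun α => by' * Real.cos (α + Δα₃) with hy'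
  set x' : ℝ → ℝ := fun α =>
    ahat * ((2*(k:ℝ)+1) * Real.cos (α + Δα₁) ^ (2*k) * (-Real.sin (α + Δα₁)))
      + bxhat * ((2*(l:ℝ)+1) * Real.sin (α + Δα₂) ^ (2*l) * Real.cos (α + Δα₂)) with hx'
  have hyd : ∀ α : ℝ, HasDerivAt (fun α => by' * Real.sin (α + Δα₃)) (y' α) α := by
    intro α
    simpa [hy'] using (((hasDerivAt_id α).add_const Δα₃).sin).const_mul by'
  have hxd : ∀ α : ℝ, HasDerivAt
      (fun α => ahat * Real.cos (α + Δα₁) ^ (2*k+1) + bxhat * Real.sin (α + Δα₂) ^ (2*l+1))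
      (x' α) α := by
    intro α
    have h1 : HasDerivAt (fun α : ℝ => Real.cos (α + Δα₁)) (-Real.sin (α + Δα₁)) α := by
      simpa using ((hasDerivAt_id α).add_const Δα₁).cos
    have h2 : HasDerivAt (fun α : ℝ => Real.sin (α + Δα₂)) (Real.cos (α + Δα₂)) α := by
      simpa using ((hasDerivAt_id α).add_const Δα₂).sin
    have := ((h1.fun_pow (2*k+1)).const_mul ahat).add ((h2.fun_pow (2*l+1)).const_mul bxhat)
    refine this.congr_deriv ?_
    simp only [hx']
    push_cast
    ring
  have hderiv_y : ∀ α : ℝ, deriv (fun α => by' * Real.sin (α + Δα₃)) α = y' α :=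
    fun α => (hyd α).deriv
  have hderiv_x : ∀ α : ℝ, deriv
      (fun α => ahat * Real.cos (α + Δα₁) ^ (2*k+1) + bxhat * Real.sin (α + Δα₂) ^ (2*l+1)) α
      = x' α := fun α => (hxd α).deriv
  simp only [hderiv_x, hderiv_y]
  set X : ℝ → ℝ := fun α => ahat * Real.cos (α + Δα₁) ^ (2*k+1) + bxhat * Real.sin (α + Δα₂) ^ (2*l+1) with hX
  -- integration by parts
  have ibp : ∫ α in (0:ℝ)..(2*π), (x' α * (by' * Real.sin (α + Δα₃)) + X α * y' α)
      = X (2*π) * (by' * Real.sin (2*π + Δα₃)) - X 0 * (by' * Real.sin (0 + Δα₃)) := by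
    exact intervalIntegral.integral_deriv_mul_eq_sub (fun α _ => hxd α) (fun α _ => hyd α)
      (by apply Continuous.intervalIntegrable; fun_prop)
      (by apply Continuous.intervalIntegrable; fun_prop)
  have hbd : X (2*π) * (by' * Real.sin (2*π + Δα₃)) - X 0 * (by' * Real.sin (0 + Δα₃)) = 0 := by
    simp [hX, show 2*π + Δα₁ = Δα₁ + 2*π by ring, show 2*π + Δα₂ = Δα₂ + 2*π by ring,
      show 2*π + Δα₃ = Δα₃ + 2*π by ring, Real.cos_add_two_pi, Real.sin_add_two_pi]
  have split : ∫ α in (0:ℝ)..(2*π), (X α * y' α - (by' * Real.sin (α + Δα₃)) * x' α)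
      = 2 * (∫ α in (0:ℝ)..(2*π), X α * y' α)
        - ∫ α in (0:ℝ)..(2*π), (x' α * (by' * Real.sin (α + Δα₃)) + X α * y' α) := by
    rw [← intervalIntegral.integral_const_mul, ← intervalIntegral.integral_sub
      (by apply Continuous.intervalIntegrable; simp only [hX, hy']; fun_prop)
      (by apply Continuous.intervalIntegrable; simp only [hX, hy', hx']; fun_prop)]
    apply intervalIntegral.integral_congr
    intro α _
    ring
  rw [split, ibp, hbd, sub_zero]
  -- main integral
  have hmain : (∫ α in (0:ℝ)..(2*π), X α * y' α)
      = ahat * by' * (Real.cos (Δα₁ - Δα₃) * (2 * π * (Nat.choose (2*k+2) (k+1)) / 4 ^ (k+1)))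
        + bxhat * by' * (Real.sin (Δα₂ - Δα₃) * (2 * π * (Nat.choose (2*l+2) (l+1)) / 4 ^ (l+1))) := by
    have hpt : ∀ α : ℝ, X α * y' α
        = ahat * by' * (Real.cos (α + Δα₁) ^ (2*k+1) * Real.cos (α + Δα₃))
          + bxhat * by' * (Real.sin (α + Δα₂) ^ (2*l+1) * Real.cos (α + Δα₃)) := by
      intro α; simp only [hX, hy']; ring
    simp only [hpt]
    rw [intervalIntegral.integral_add
      (by apply Continuous.intervalIntegrable; fun_prop)
      (by apply Continuous.intervalIntegrable; fun_prop),
      intervalIntegral.integral_const_mul, intervalIntegral.integral_const_mul,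
      key_cos k Δα₁ Δα₃, key_sin l Δα₂ Δα₃]
  rw [hmain]
  -- final algebra
  have e1 : 2*k+1-1 = 2*k := by omega
  have e2 : (2*k+1-1)/2 = k := by omega
  have e3 : 2*k+1+1 = 2*k+2 := by omega
  have e4 : (2*k+1+1)/2 = k+1 := by omega
  have f1 : 2*l+1-1 = 2*l := by omega
  have f2 : (2*l+1-1)/2 = l := by omega
  have f3 : 2*l+1+1 = 2*l+2 := by omega
  have f4 : (2*l+1+1)/2 = l+1 := by omega
  rw [e2, e4, e1, e3, f2, f4, f1, f3]
  have hbk := binom_key' k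
  have hbl := binom_key' l
  have h4k : (4:ℝ)^k ≠ 0 := by positivity
  have h4l : (4:ℝ)^l ≠ 0 := by positivity
  have h2k : (2:ℝ)^(2*k+1) = 2 * 4^k := by
    rw [pow_succ, pow_mul]; norm_num; ring
  have h2l : (2:ℝ)^(2*l+1) = 2 * 4^l := by
    rw [pow_succ, pow_mul]; norm_num; ring
  push_cast
  rw [h2k, h2l]
  field_simp
  linear_combination (16 * ahat * by' * Real.cos (Δα₁-Δα₃) * 4^k * 4^l * 4^l) * hbk
    + (16 * bxhat * by' * Real.sin (Δα₂-Δα₃) * 4^k * 4^k * 4^l) * hbl
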